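/- (Lemma 8) For every PQCL formula φ over Σ and every word w : List Σ, the dissatisfaction score and the reward satisfy d(w, φ) = 1 - R(w, φ) / (opt φ + 1) (as rationals); in particular d(w, φ) = 1 when R(w, φ) = 0, and d(w, φ) = 1 - R(w, φ)/(opt φ + 1) < 1 when R(w, φ) > 0. -/

import Mathlib

inductive PQCL (A : Type*) where
  | atom : Set (List A) → PQCL A
  | odis : PQCL A → PQCL A → PQCL A
  | pconj : PQCL A → PQCL A → PQCL A

namespace PQCL

variable {A : Type*}

/-- Optionality of a PQCL formula. -/
def opt : PQCL A → ℕ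
  | atom _ => 1
  | odis φ₁ φ₂ => opt φ₁ + opt φ₂
  | pconj φ₁ φ₂ => opt φ₁ * opt φ₂

open Classical in
/-- Satisfaction degree of a word w.r.t. a PQCL formula (`none` = does not satisfy). -/
noncomputable def deg : PQCL A → List A → Option ℕ
  | atom L, w => if w ∈ L then some 1 else none
  | odis φ₁ φ₂, w =>
    match deg φ₁ w with
    | some k => some k
    | none =>
      match deg φ₂ w with
      | some n => some (n + opt φ₁)
      | none => none
  | pconj φ₁ φ₂, w =>
    match deg φ₁ w, deg φ₂ w with
    | some i, some j => some (opt φ₂ * (i - 1) + j)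
    | _, _ => none

/-- Dissatisfaction score of a word w.r.t. a PQCL formula. -/
noncomputable def dscore (w : List A) (φ : PQCL A) : ℚ :=
  match deg φ w with
  | some k => (k : ℚ) / (opt φ + 1)
  | none => 1

/-- Reward associated with a word w.r.t. a PQCL formula. -/
noncomputable def reward (w : List A) (φ : PQCL A) : ℕ :=
  match deg φ w with
  | some k => opt φ - k + 1
  | none => 0

lemma opt_pos (φ : PQCL A) : 1 ≤ opt φ := by
  induction φ with
  | atom L => simp [opt]
  | odis φ₁ φ₂ ih₁ ih₂ => simp [opt]; omega
  | pconj φ₁ φ₂ ih₁ ih₂ => simpa [opt] using Nat.mul_le_mul ih₁ ih₂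

lemma deg_bounds (φ : PQCL A) (w : List A) {k : ℕ} (h : deg φ w = some k) :
    1 ≤ k ∧ k ≤ opt φ := by
  induction φ generalizing k with
  | atom L =>
    simp only [deg] at h
    split at h
    · simp_all [opt]
    · simp at h
  | odis φ₁ φ₂ ih₁ ih₂ =>
    simp only [deg] at h
    rcases h1 : deg φ₁ w with _ | k1
    · rw [h1] at h
      rcases h2 : deg φ₂ w with _ | k2
      · rw [h2] at h; simp at h
      · rw [h2] at h
        simp at h
        obtain ⟨hk1, hk2⟩ := ih₂ h2
        have := opt_pos (A := A) φ₁
        simp [opt]; omega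
    · rw [h1] at h; simp at h; subst h
      obtain ⟨hk1, hk2⟩ := ih₁ h1
      simp [opt]; omega
  | pconj φ₁ φ₂ ih₁ ih₂ =>
    simp only [deg] at h
    rcases h1 : deg φ₁ w with _ | i <;> rw [h1] at h
    · simp at h
    rcases h2 : deg φ₂ w with _ | j <;> rw [h2] at h
    · simp at h
    simp at h; subst h
    obtain ⟨hi1, hi2⟩ := ih₁ h1
    obtain ⟨hj1, hj2⟩ := ih₂ h2
    constructor
    · omega
    · calc opt φ₂ * (i - 1) + j ≤ opt φ₂ * (opt φ₁ - 1) + opt φ₂ := by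
            have := Nat.mul_le_mul_left (opt φ₂) (Nat.sub_le_sub_right hi2 1); omega
        _ = opt φ₂ * opt φ₁ := by
            obtain ⟨m, hm⟩ := Nat.exists_eq_add_of_le (opt_pos (A := A) φ₁)
            rw [hm, Nat.add_sub_cancel_left]; ring
        _ = opt (φ₁.pconj φ₂) := by rw [opt, Nat.mul_comm]

end PQCL

theorem dscore_eq_one_sub_reward {A : Type*} (φ : PQCL A) (w : List A) :
    PQCL.dscore w φ = 1 - (PQCL.reward w φ : ℚ) / (PQCL.opt φ + 1) ∧
    (PQCL.reward w φ = 0 → PQCL.dscore w φ = 1) ∧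
    (0 < PQCL.reward w φ →
      PQCL.dscore w φ = 1 - (PQCL.reward w φ : ℚ) / (PQCL.opt φ + 1) ∧
      PQCL.dscore w φ < 1) := by
  have hopt := PQCL.opt_pos (A := A) φ
  have hden : ((PQCL.opt φ : ℚ) + 1) ≠ 0 := by positivity
  rcases h : PQCL.deg φ w with _ | k
  · have hd : PQCL.dscore w φ = 1 := by simp [PQCL.dscore, h]
    have hr : PQCL.reward w φ = 0 := by simp [PQCL.reward, h]
    refine ⟨?_, fun _ => hd, ?_⟩
    · simp [hd, hr]
    · intro hpos; omega
  · obtain ⟨hk1, hk2⟩ := PQCL.deg_bounds φ w h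
    have hd : PQCL.dscore w φ = (k : ℚ) / (PQCL.opt φ + 1) := by simp [PQCL.dscore, h]
    have hr : PQCL.reward w φ = PQCL.opt φ - k + 1 := by simp [PQCL.reward, h]
    have hcast : (PQCL.reward w φ : ℚ) = (PQCL.opt φ : ℚ) - k + 1 := by
      rw [hr]; push_cast [Nat.cast_sub hk2]; ring
    have hmain : PQCL.dscore w φ = 1 - (PQCL.reward w φ : ℚ) / (PQCL.opt φ + 1) := by
      rw [hd, hcast]; field_simp; ring
    refine ⟨hmain, fun h0 => by omega, fun _ => ⟨hmain, ?_⟩⟩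
    rw [hd]
    rw [div_lt_one (by positivity)]
    have : (k : ℚ) ≤ PQCL.opt φ := by exact_mod_cast hk2
    linarith
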